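/- Let $X$ be a metric space, $I$ a countable set, and $(a_i)_{i\in I}$ a symmetrically summable family in $C^*_u(X)$, i.e., for every $\lambda \in \mathbb{D}^I$ the sum $a_\lambda = \sum_i \lambda_i a_i$ converges in the weak operator topology to an element of $C^*_u(X)$. Then for every $\epsilon > 0$ there exists $r > 0$ such that for all $\lambda \in \mathbb{D}^I$, the operator $a_\lambda$ can be $\epsilon$-$r$-approximated. -/

import Mathlib

/- Common setup: `ℓ²(X)`, matrix entries, propagation, approximation,
and the uniform Roe algebra as a set of bounded operators. -/

noncomputable section
open scoped InnerProductSpace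
open Function

/-- `ℓ²(X)` with complex coefficients. -/
abbrev H2 (X : Type*) := lp (fun _ : X => ℂ) 2

/-- The canonical basis vector `δ_x` of `ℓ²(X)`. -/
def deltaV (X : Type*) (x : X) : H2 X :=
  haveI := Classical.decEq X
  lp.single 2 x 1

/-- The matrix entry `a_{xy} = ⟪δ_x, a δ_y⟫` of a bounded operator on `ℓ²(X)`. -/
def entry {X : Type*} (a : H2 X →L[ℂ] H2 X) (x y : X) : ℂ :=
  ⟪deltaV X x, a (deltaV X y)⟫_ℂ

/-- `a` has propagation at most `r`. -/
def HasPropLE {X : Type*} [MetricSpace X] (a : H2 X →L[ℂ] H2 X) (r : ℝ) : Prop :=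
  ∀ x y : X, dist x y > r → entry a x y = 0

/-- `a` can be `ε`-`r`-approximated: there is `b` of propagation at most `r`
with `‖a - b‖ ≤ ε`. -/
def IsApprox {X : Type*} [MetricSpace X] (a : H2 X →L[ℂ] H2 X) (ε r : ℝ) : Prop :=
  ∃ b : H2 X →L[ℂ] H2 X, HasPropLE b r ∧ ‖a - b‖ ≤ ε

/-- The uniform Roe algebra of `X`, as the norm closure of the finite
propagation operators in `B(ℓ²(X))`. -/
def roeSet (X : Type*) [MetricSpace X] : Set (H2 X →L[ℂ] H2 X) :=
  closure {a | ∃ r : ℝ, HasPropLE a r}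

/-! ### Auxiliary lemmas -/

open Filter Topology Metric

set_option maxHeartbeats 1000000

section Aux

variable {X : Type*}

lemma BF.entry_add (T T' : H2 X →L[ℂ] H2 X) (x y : X) :
    entry (T + T') x y = entry T x y + entry T' x y := by
  simp [entry, inner_add_right]

lemma BF.entry_smul (c : ℂ) (T : H2 X →L[ℂ] H2 X) (x y : X) :
    entry (c • T) x y = c * entry T x y := by
  simp [entry, inner_smul_right]

variable [MetricSpace X]

lemma BF.hasPropLE_mono {T : H2 X →L[ℂ] H2 X} {r r' : ℝ} (h : HasPropLE T r) (hrr' : r ≤ r') :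
    HasPropLE T r' := fun x y hxy => h x y (lt_of_le_of_lt hrr' hxy)

lemma BF.hasPropLE_add {T T' : H2 X →L[ℂ] H2 X} {r : ℝ} (h : HasPropLE T r)
    (h' : HasPropLE T' r) : HasPropLE (T + T') r := fun x y hxy => by
  rw [BF.entry_add, h x y hxy, h' x y hxy, add_zero]

lemma BF.hasPropLE_smul {T : H2 X →L[ℂ] H2 X} {r : ℝ} (c : ℂ) (h : HasPropLE T r) :
    HasPropLE (c • T) r := fun x y hxy => by rw [BF.entry_smul, h x y hxy, mul_zero]

lemma BF.hasPropLE_sum {ι : Type*} {F : Finset ι} {T : ι → (H2 X →L[ℂ] H2 X)} {r : ℝ}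
    (h : ∀ i ∈ F, HasPropLE (T i) r) : HasPropLE (∑ i ∈ F, T i) r := by
  classical
  induction F using Finset.induction_on with
  | empty => intro x y _; simp [entry, inner_zero_right]
  | @insert i F hi ih =>
    rw [Finset.sum_insert hi]
    exact BF.hasPropLE_add (h i (Finset.mem_insert_self i F))
      (ih fun j hj => h j (Finset.mem_insert_of_mem hj))

omit [MetricSpace X] in
lemma BF.opNorm_le_of_inner {T : H2 X →L[ℂ] H2 X} {C : ℝ} (hC : 0 ≤ C)
    (h : ∀ u v : H2 X, ‖⟪u, T v⟫_ℂ‖ ≤ C * ‖u‖ * ‖v‖) : ‖T‖ ≤ C := by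
  apply T.opNorm_le_bound hC
  intro v
  rcases eq_or_lt_of_le (norm_nonneg (T v)) with h0 | h0
  · rw [← h0]; positivity
  · have e : ‖⟪T v, T v⟫_ℂ‖ = ‖T v‖ ^ 2 := by
      rw [inner_self_eq_norm_sq_to_K]
      simp [norm_pow, RCLike.norm_ofReal, abs_norm]
    have h1 := h (T v) v
    rw [e] at h1
    nlinarith

omit [MetricSpace X] in
/-- Ultrafilter (WOT) limit of a uniformly bounded family of operators. -/
lemma BF.exists_wot_limit {α : Type*} (𝒰 : Ultrafilter α)
    (b : α → (H2 X →L[ℂ] H2 X)) {M : ℝ}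
    {U : Set α} (hU : U ∈ 𝒰) (hb : ∀ mu ∈ U, ‖b mu‖ ≤ M) :
    ∃ B : H2 X →L[ℂ] H2 X, ∀ u v : H2 X,
      Tendsto (fun mu => ⟪u, b mu v⟫_ℂ) (𝒰 : Filter α) (𝓝 ⟪u, B v⟫_ℂ) := by
  classical
  have key_bound : ∀ mu ∈ U, ∀ u v : H2 X, ‖⟪u, b mu v⟫_ℂ‖ ≤ M * ‖u‖ * ‖v‖ := by
    intro mu hmu u v
    calc ‖⟪u, b mu v⟫_ℂ‖ ≤ ‖u‖ * ‖b mu v‖ := norm_inner_le_norm _ _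
      _ ≤ ‖u‖ * (M * ‖v‖) := by
          have h1 : ‖b mu v‖ ≤ M * ‖v‖ :=
            le_trans ((b mu).le_opNorm v)
              (mul_le_mul_of_nonneg_right (hb mu hmu) (norm_nonneg v))
          exact mul_le_mul_of_nonneg_left h1 (norm_nonneg u)
      _ = M * ‖u‖ * ‖v‖ := by ring
  have key : ∀ u v : H2 X, ∃ z : ℂ,
      Tendsto (fun mu => ⟪u, b mu v⟫_ℂ) (𝒰 : Filter α) (𝓝 z) := by
    intro u v
    have hbound : ∀ mu ∈ U, (fun mu => ⟪u, b mu v⟫_ℂ) mu ∈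
        Metric.closedBall (0:ℂ) (M * ‖u‖ * ‖v‖) := by
      intro mu hmu
      rw [Metric.mem_closedBall, dist_zero_right]
      exact key_bound mu hmu u v
    have hle : (Ultrafilter.map (fun mu => ⟪u, b mu v⟫_ℂ) 𝒰 : Filter ℂ) ≤
        𝓟 (Metric.closedBall (0:ℂ) (M * ‖u‖ * ‖v‖)) := by
      rw [le_principal_iff]
      exact Filter.mem_map.mpr (Filter.mem_of_superset hU hbound)
    obtain ⟨z, _, hz⟩ := (isCompact_closedBall (0:ℂ) _).ultrafilter_le_nhds
      (Ultrafilter.map _ 𝒰) hle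
    exact ⟨z, hz⟩
  set φ : H2 X → H2 X → ℂ := fun u v => (key u v).choose
  have hφ : ∀ u v, Tendsto (fun mu => ⟪u, b mu v⟫_ℂ) (𝒰 : Filter α) (𝓝 (φ u v)) :=
    fun u v => (key u v).choose_spec
  have φ_addL : ∀ u u' v, φ (u + u') v = φ u v + φ u' v := by
    intro u u' v
    refine tendsto_nhds_unique (hφ (u + u') v) ?_
    refine Tendsto.congr (fun mu => ?_) ((hφ u v).add (hφ u' v))
    rw [inner_add_left]
  have φ_smulL : ∀ (c : ℂ) u v, φ (c • u) v = (starRingEnd ℂ) c * φ u v := by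
    intro c u v
    refine tendsto_nhds_unique (hφ (c • u) v) ?_
    refine Tendsto.congr (fun mu => ?_) ((hφ u v).const_mul ((starRingEnd ℂ) c))
    rw [inner_smul_left]
  have φ_addR : ∀ u v w, φ u (v + w) = φ u v + φ u w := by
    intro u v w
    refine tendsto_nhds_unique (hφ u (v + w)) ?_
    refine Tendsto.congr (fun mu => ?_) ((hφ u v).add (hφ u w))
    rw [map_add, inner_add_right]
  have φ_smulR : ∀ (c : ℂ) u v, φ u (c • v) = c * φ u v := by
    intro c u v
    refine tendsto_nhds_unique (hφ u (c • v)) ?_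
    refine Tendsto.congr (fun mu => ?_) ((hφ u v).const_mul c)
    rw [map_smul, inner_smul_right]
  have φ_bound : ∀ u v, ‖φ u v‖ ≤ M * ‖u‖ * ‖v‖ := by
    intro u v
    refine le_of_tendsto (hφ u v).norm ?_
    exact Filter.mem_of_superset hU (fun mu hmu => key_bound mu hmu u v)
  have hM : 0 ≤ M := by
    obtain ⟨mu, hmu⟩ : U.Nonempty := Ultrafilter.nonempty_of_mem hU
    exact le_trans (norm_nonneg _) (hb mu hmu)
  let g : H2 X → (StrongDual ℂ (H2 X)) := fun v =>
    LinearMap.mkContinuous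
      { toFun := fun u => (starRingEnd ℂ) (φ u v)
        map_add' := fun u u' => by
          show (starRingEnd ℂ) (φ (u + u') v) = _
          rw [φ_addL, map_add]
        map_smul' := fun c u => by
          show (starRingEnd ℂ) (φ (c • u) v) = (RingHom.id ℂ) c • (starRingEnd ℂ) (φ u v)
          rw [φ_smulL, map_mul, Complex.conj_conj, RingHom.id_apply, smul_eq_mul] }
      (M * ‖v‖)
      (fun u => by
        simp only [LinearMap.coe_mk, AddHom.coe_mk, RCLike.norm_conj]
        calc ‖φ u v‖ ≤ M * ‖u‖ * ‖v‖ := φ_bound u v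
          _ = M * ‖v‖ * ‖u‖ := by ring)
  have hg : ∀ v u, g v u = (starRingEnd ℂ) (φ u v) := fun v u => rfl
  let Blin : H2 X →ₗ[ℂ] H2 X :=
    { toFun := fun v => (InnerProductSpace.toDual ℂ (H2 X)).symm (g v)
      map_add' := fun v w => by
        have h1 : g (v + w) = g v + g w := by
          refine ContinuousLinearMap.ext (fun u => ?_)
          rw [ContinuousLinearMap.add_apply, hg, hg, hg, φ_addR, map_add]
        show (InnerProductSpace.toDual ℂ (H2 X)).symm (g (v + w)) =
          (InnerProductSpace.toDual ℂ (H2 X)).symm (g v) +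
            (InnerProductSpace.toDual ℂ (H2 X)).symm (g w)
        rw [h1, map_add]
      map_smul' := fun c v => by
        have h1 : g (c • v) = (starRingEnd ℂ) c • g v := by
          refine ContinuousLinearMap.ext (fun u => ?_)
          rw [ContinuousLinearMap.smul_apply, hg, hg, φ_smulR, map_mul, smul_eq_mul]
        show (InnerProductSpace.toDual ℂ (H2 X)).symm (g (c • v)) =
          (RingHom.id ℂ) c • (InnerProductSpace.toDual ℂ (H2 X)).symm (g v)
        rw [h1, LinearIsometryEquiv.map_smulₛₗ, RingHom.id_apply, Complex.conj_conj] }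
  have hBlin : ∀ v, ‖Blin v‖ ≤ M * ‖v‖ := by
    intro v
    show ‖(InnerProductSpace.toDual ℂ (H2 X)).symm (g v)‖ ≤ M * ‖v‖
    rw [LinearIsometryEquiv.norm_map]
    exact LinearMap.mkContinuous_norm_le _ (by positivity) _
  let B : H2 X →L[ℂ] H2 X := Blin.mkContinuous M hBlin
  have hB : ∀ u v : H2 X, ⟪u, B v⟫_ℂ = φ u v := by
    intro u v
    have h1 : ⟪B v, u⟫_ℂ = g v u := by
      show ⟪(InnerProductSpace.toDual ℂ (H2 X)).symm (g v), u⟫_ℂ = g v u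
      exact InnerProductSpace.toDual_symm_apply
    have h2 : ⟪u, B v⟫_ℂ = (starRingEnd ℂ) ⟪B v, u⟫_ℂ := (inner_conj_symm _ _).symm
    rw [h2, h1, hg, Complex.conj_conj]
  exact ⟨B, fun u v => by rw [hB]; exact hφ u v⟩

/-- Closedness of the set of `ε`-`r`-approximable parameters. -/
lemma BF.isClosed_approx {Λ : Type*} [TopologicalSpace Λ]
    (S : Λ → (H2 X →L[ℂ] H2 X)) {M : ℝ}
    (hM : ∀ lam, ‖S lam‖ ≤ M)
    (hcont : ∀ u v : H2 X, Continuous fun lam => ⟪u, S lam v⟫_ℂ)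
    (ε r : ℝ) (hε : 0 ≤ ε) :
    IsClosed {lam : Λ | IsApprox (S lam) ε r} := by
  classical
  set Uset : Set Λ := {lam : Λ | IsApprox (S lam) ε r} with hUset
  apply isClosed_of_closure_subset
  intro lam hlam
  have hcl : ClusterPt lam (𝓟 Uset) := mem_closure_iff_clusterPt.mp hlam
  haveI : (𝓝 lam ⊓ 𝓟 Uset).NeBot := hcl
  obtain ⟨𝒰, h𝒰⟩ := Ultrafilter.exists_le (𝓝 lam ⊓ 𝓟 Uset)
  have h1 : (𝒰 : Filter Λ) ≤ 𝓝 lam := h𝒰.trans inf_le_left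
  have hUmem : Uset ∈ 𝒰 := le_principal_iff.mp (h𝒰.trans inf_le_right)
  set b : Λ → (H2 X →L[ℂ] H2 X) := fun mu =>
    if h : IsApprox (S mu) ε r then h.choose else 0 with hbdef
  have hprop : ∀ mu ∈ Uset, HasPropLE (b mu) r := by
    intro mu hmu
    have hmu' : IsApprox (S mu) ε r := hmu
    show HasPropLE (if h : IsApprox (S mu) ε r then h.choose else 0) r
    rw [dif_pos hmu']
    exact hmu'.choose_spec.1
  have hclose : ∀ mu ∈ Uset, ‖S mu - b mu‖ ≤ ε := by
    intro mu hmu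
    have hmu' : IsApprox (S mu) ε r := hmu
    show ‖S mu - (if h : IsApprox (S mu) ε r then h.choose else 0)‖ ≤ ε
    rw [dif_pos hmu']
    exact hmu'.choose_spec.2
  have hbound : ∀ mu ∈ Uset, ‖b mu‖ ≤ M + ε := by
    intro mu hmu
    calc ‖b mu‖ = ‖S mu - (S mu - b mu)‖ := by rw [sub_sub_cancel]
      _ ≤ ‖S mu‖ + ‖S mu - b mu‖ := norm_sub_le _ _
      _ ≤ M + ε := add_le_add (hM mu) (hclose mu hmu)
  obtain ⟨B, hB⟩ := BF.exists_wot_limit 𝒰 b hUmem hbound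
  refine ⟨B, ?_, ?_⟩
  · intro x y hxy
    have t0 : Tendsto (fun mu => ⟪deltaV X x, b mu (deltaV X y)⟫_ℂ)
        (𝒰 : Filter Λ) (𝓝 0) := by
      refine Tendsto.congr' ?_ tendsto_const_nhds
      filter_upwards [hUmem] with mu hmu
      exact (hprop mu hmu x y hxy).symm
    exact tendsto_nhds_unique (hB _ _) t0
  · refine BF.opNorm_le_of_inner hε (fun u v => ?_)
    have hSub : ⟪u, (S lam - B) v⟫_ℂ = ⟪u, S lam v⟫_ℂ - ⟪u, B v⟫_ℂ := by
      rw [ContinuousLinearMap.sub_apply, inner_sub_right]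
    rw [hSub]
    have hts : Tendsto (fun mu => ⟪u, S mu v⟫_ℂ) (𝒰 : Filter Λ) (𝓝 ⟪u, S lam v⟫_ℂ) :=
      ((hcont u v).tendsto lam).mono_left h1
    have ht : Tendsto (fun mu => ⟪u, S mu v⟫_ℂ - ⟪u, b mu v⟫_ℂ) (𝒰 : Filter Λ)
        (𝓝 (⟪u, S lam v⟫_ℂ - ⟪u, B v⟫_ℂ)) := hts.sub (hB u v)
    refine le_of_tendsto ht.norm ?_
    filter_upwards [hUmem] with mu hmu
    have e : ⟪u, S mu v⟫_ℂ - ⟪u, b mu v⟫_ℂ = ⟪u, ((S mu - b mu) : H2 X →L[ℂ] H2 X) v⟫_ℂ := by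
      rw [ContinuousLinearMap.sub_apply, inner_sub_right]
    rw [e]
    calc ‖⟪u, ((S mu - b mu) : H2 X →L[ℂ] H2 X) v⟫_ℂ‖
        ≤ ‖u‖ * ‖(S mu - b mu) v‖ := norm_inner_le_norm _ _
      _ ≤ ‖u‖ * (ε * ‖v‖) := by
          have h2 : ‖(S mu - b mu) v‖ ≤ ε * ‖v‖ :=
            le_trans ((S mu - b mu).le_opNorm v)
              (mul_le_mul_of_nonneg_right (hclose mu hmu) (norm_nonneg v))
          exact mul_le_mul_of_nonneg_left h2 (norm_nonneg u)
      _ = ε * ‖u‖ * ‖v‖ := by ring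

end Aux

instance : CompactSpace {z : ℂ // ‖z‖ ≤ 1} := by
  have h : IsCompact {z : ℂ | ‖z‖ ≤ 1} := by
    have he : {z : ℂ | ‖z‖ ≤ 1} = Metric.closedBall 0 1 := by
      ext z; simp [Metric.mem_closedBall, dist_zero_right]
    rw [he]; exact isCompact_closedBall 0 1
  exact isCompact_iff_compactSpace.mp h

instance : Nonempty {z : ℂ // ‖z‖ ≤ 1} := ⟨⟨0, by norm_num⟩⟩

/-- Braga–Farah: if `(a i)` is a symmetrically summable countable family in the
uniform Roe algebra (for every `λ ∈ 𝔻^I` the sum `a_λ = ∑ λ i • a i` converges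
in the weak operator topology to an element `S λ` of the uniform Roe algebra),
then for every `ε > 0` there is a single `r > 0` such that every `a_λ` can be
`ε`-`r`-approximated. -/
theorem braga_farah_uniform_approximation
    {X : Type*} [MetricSpace X] {I : Type*} [Countable I]
    (a : I → (H2 X →L[ℂ] H2 X)) (ha : ∀ i, a i ∈ roeSet X)
    (S : (I → {z : ℂ // ‖z‖ ≤ 1}) → (H2 X →L[ℂ] H2 X))
    (hS_roe : ∀ lam : I → {z : ℂ // ‖z‖ ≤ 1}, S lam ∈ roeSet X)
    (hS_sum : ∀ (lam : I → {z : ℂ // ‖z‖ ≤ 1}) (u v : H2 X),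
      HasSum (fun i => (lam i : ℂ) * ⟪u, a i v⟫_ℂ) ⟪u, S lam v⟫_ℂ) :
    ∀ ε > (0 : ℝ), ∃ r > (0 : ℝ), ∀ lam : I → {z : ℂ // ‖z‖ ≤ 1},
      IsApprox (S lam) ε r := by
  classical
  intro ε hε
  -- absolute summability of matrix entries
  have hsummable : ∀ u v : H2 X, Summable (fun i => ‖⟪u, a i v⟫_ℂ‖) := by
    intro u v
    have h := (hS_sum (fun _ => ⟨1, by norm_num⟩) u v).summable
    simp only [one_mul] at h
    exact summable_norm_iff.mpr h
  -- continuity of the matrix entries of `S` in `lam`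
  have hcont : ∀ u v : H2 X, Continuous fun lam : I → {z : ℂ // ‖z‖ ≤ 1} => ⟪u, S lam v⟫_ℂ := by
    intro u v
    have he : (fun lam : I → {z : ℂ // ‖z‖ ≤ 1} => ⟪u, S lam v⟫_ℂ)
        = fun lam : I → {z : ℂ // ‖z‖ ≤ 1} => ∑' i, (lam i : ℂ) * ⟪u, a i v⟫_ℂ :=
      funext fun lam => ((hS_sum lam u v).tsum_eq).symm
    rw [he]
    refine continuous_tsum (fun i => ?_) (hsummable u v) (fun i lam => ?_)
    · exact (continuous_subtype_val.comp (continuous_apply i)).mul continuous_const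
    · rw [norm_mul]
      exact mul_le_of_le_one_left (norm_nonneg _) (lam i).2
  -- uniform bound on `‖S lam‖`
  have hMv : ∀ v : H2 X, ∃ Cv : ℝ, ∀ lam : I → {z : ℂ // ‖z‖ ≤ 1}, ‖S lam v‖ ≤ Cv := by
    intro v
    have hpt : ∀ u : H2 X, ∃ C : ℝ, ∀ lam : I → {z : ℂ // ‖z‖ ≤ 1}, ‖(innerSL ℂ (S lam v)) u‖ ≤ C := by
      intro u
      refine ⟨∑' i, ‖⟪u, a i v⟫_ℂ‖, fun lam => ?_⟩
      have h0 : (innerSL ℂ (S lam v)) u = ⟪S lam v, u⟫_ℂ := rfl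
      rw [h0, ← norm_inner_symm]
      rw [← (hS_sum lam u v).tsum_eq]
      have hs : Summable (fun i => ‖(lam i : ℂ) * ⟪u, a i v⟫_ℂ‖) := by
        refine Summable.of_nonneg_of_le (fun i => norm_nonneg _) (fun i => ?_) (hsummable u v)
        rw [norm_mul]
        exact mul_le_of_le_one_left (norm_nonneg _) (lam i).2
      calc ‖∑' i, (lam i : ℂ) * ⟪u, a i v⟫_ℂ‖
          ≤ ∑' i, ‖(lam i : ℂ) * ⟪u, a i v⟫_ℂ‖ := norm_tsum_le_tsum_norm hs
        _ ≤ ∑' i, ‖⟪u, a i v⟫_ℂ‖ := by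
            refine Summable.tsum_le_tsum (fun i => ?_) hs (hsummable u v)
            rw [norm_mul]
            exact mul_le_of_le_one_left (norm_nonneg _) (lam i).2
    obtain ⟨C', hC'⟩ := banach_steinhaus hpt
    exact ⟨C', fun lam => by have := hC' lam; rwa [innerSL_apply_norm] at this⟩
  have hMex : ∃ M : ℝ, ∀ lam : I → {z : ℂ // ‖z‖ ≤ 1}, ‖S lam‖ ≤ M := by
    choose C hC using hMv
    exact banach_steinhaus (g := S) (fun v => ⟨C v, fun lam => hC v lam⟩)
  obtain ⟨M, hM⟩ := hMex
  -- Baire category argument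
  haveI : Nonempty (I → {z : ℂ // ‖z‖ ≤ 1}) := ⟨fun _ => ⟨0, by norm_num⟩⟩
  set Uset : ℕ → Set (I → {z : ℂ // ‖z‖ ≤ 1}) := fun n => {lam : I → {z : ℂ // ‖z‖ ≤ 1} | IsApprox (S lam) (ε / 2) (n : ℝ)} with hUset
  have hclosed : ∀ n : ℕ, IsClosed (Uset n) :=
    fun n => BF.isClosed_approx S hM hcont (ε / 2) (n : ℝ) (by linarith)
  have hcover : ⋃ n, Uset n = Set.univ := by
    ext lam
    simp only [Set.mem_iUnion, Set.mem_univ, iff_true]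
    have h := hS_roe lam
    rw [roeSet, Metric.mem_closure_iff] at h
    obtain ⟨b, hb, hdist⟩ := h (ε / 2) (by linarith)
    obtain ⟨s, hs⟩ := hb
    refine ⟨⌈s⌉₊, b, BF.hasPropLE_mono hs (Nat.le_ceil s), ?_⟩
    rw [← dist_eq_norm]
    exact le_of_lt hdist
  obtain ⟨n, lam₀, hlam₀⟩ := nonempty_interior_of_iUnion_of_closed hclosed hcover
  obtain ⟨F, V, hFV, hsub⟩ := isOpen_pi_iff.mp isOpen_interior lam₀ hlam₀
  -- approximants for each `a i`
  set δ : ℝ := ε / (4 * ((F.card : ℝ) + 1)) with hδdef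
  have hδpos : 0 < δ := by
    have : (0:ℝ) < 4 * ((F.card : ℝ) + 1) := by positivity
    exact div_pos hε this
  have hai : ∀ i : I, ∃ c : H2 X →L[ℂ] H2 X, (∃ s : ℝ, HasPropLE c s) ∧ ‖a i - c‖ ≤ δ := by
    intro i
    have h := ha i
    rw [roeSet, Metric.mem_closure_iff] at h
    obtain ⟨c, hc, hd⟩ := h δ hδpos
    rw [dist_eq_norm] at hd
    exact ⟨c, hc, le_of_lt hd⟩
  choose bfun hbprop hbclose using hai
  choose sfun hsfun using hbprop
  -- the common propagation bound
  set R : ℝ := max (max (n : ℝ) 1) ((F.sup fun i => ⌈sfun i⌉₊ : ℕ) : ℝ) with hRdef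
  refine ⟨R, lt_of_lt_of_le one_pos (le_trans (le_max_right _ _) (le_max_left _ _)), ?_⟩
  intro mu
  set nu : I → {z : ℂ // ‖z‖ ≤ 1} := fun i => if i ∈ F then lam₀ i else mu i with hnudef
  have hnuF : ∀ i ∈ F, nu i = lam₀ i := fun i hi => by simp [hnudef, hi]
  have hnuNF : ∀ i ∉ F, nu i = mu i := fun i hi => by simp [hnudef, hi]
  have hnu_mem : nu ∈ (F : Set I).pi V := by
    rw [Set.mem_pi]
    intro i hi
    rw [hnuF i hi]
    exact (hFV i hi).2
  have hnuU : nu ∈ Uset n := interior_subset (hsub hnu_mem)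
  obtain ⟨b₀, hb₀prop, hb₀close⟩ := hnuU
  -- the finite difference identity
  have hdiff : S mu = S nu + ∑ i ∈ F, (((mu i : ℂ) - (lam₀ i : ℂ)) • a i) := by
    refine ContinuousLinearMap.ext fun v => ?_
    refine ext_inner_left ℂ fun u => ?_
    have h1 : HasSum (fun i => ((mu i : ℂ) - (nu i : ℂ)) * ⟪u, a i v⟫_ℂ)
        (⟪u, S mu v⟫_ℂ - ⟪u, S nu v⟫_ℂ) := by
      have h := (hS_sum mu u v).sub (hS_sum nu u v)
      have he : (fun i => ((mu i : ℂ) - (nu i : ℂ)) * ⟪u, a i v⟫_ℂ)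
          = fun i => (mu i : ℂ) * ⟪u, a i v⟫_ℂ - (nu i : ℂ) * ⟪u, a i v⟫_ℂ := by
        funext i; ring
      rw [he]; exact h
    have h2 : ∀ i ∉ F, ((mu i : ℂ) - (nu i : ℂ)) * ⟪u, a i v⟫_ℂ = 0 := by
      intro i hi
      rw [hnuNF i hi]
      simp
    have h3 := hasSum_sum_of_ne_finset_zero
      (f := fun i => ((mu i : ℂ) - (nu i : ℂ)) * ⟪u, a i v⟫_ℂ) (s := F) (L := SummationFilter.unconditional I) h2
    have h4 : ⟪u, S mu v⟫_ℂ - ⟪u, S nu v⟫_ℂ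
        = ∑ i ∈ F, ((mu i : ℂ) - (nu i : ℂ)) * ⟪u, a i v⟫_ℂ := h1.unique h3
    have h5 : ∑ i ∈ F, ((mu i : ℂ) - (nu i : ℂ)) * ⟪u, a i v⟫_ℂ
        = ∑ i ∈ F, ((mu i : ℂ) - (lam₀ i : ℂ)) * ⟪u, a i v⟫_ℂ :=
      Finset.sum_congr rfl fun i hi => by rw [hnuF i hi]
    have h6 : ⟪u, S mu v⟫_ℂ
        = ⟪u, S nu v⟫_ℂ + ∑ i ∈ F, ((mu i : ℂ) - (lam₀ i : ℂ)) * ⟪u, a i v⟫_ℂ := by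
      rw [← h5, ← h4]; ring
    rw [h6]
    simp only [ContinuousLinearMap.add_apply, ContinuousLinearMap.sum_apply,
      ContinuousLinearMap.smul_apply, inner_add_right, inner_sum, inner_smul_right]
  -- the approximant
  set coef : I → ℂ := fun i => (mu i : ℂ) - (lam₀ i : ℂ) with hcoef
  refine ⟨b₀ + ∑ i ∈ F, coef i • bfun i, ?_, ?_⟩
  · refine BF.hasPropLE_add ?_ ?_
    · refine BF.hasPropLE_mono hb₀prop ?_
      exact le_trans (le_max_left _ _) (le_max_left _ _)
    · refine BF.hasPropLE_sum fun i hi => BF.hasPropLE_smul _ ?_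
      refine BF.hasPropLE_mono (hsfun i) ?_
      calc sfun i ≤ (⌈sfun i⌉₊ : ℝ) := Nat.le_ceil _
        _ ≤ ((F.sup fun i => ⌈sfun i⌉₊ : ℕ) : ℝ) := by
            exact Nat.cast_le.mpr (Finset.le_sup (f := fun i => ⌈sfun i⌉₊) hi)
        _ ≤ R := le_max_right _ _
  · have hsplit : S mu - (b₀ + ∑ i ∈ F, coef i • bfun i)
        = (S nu - b₀) + ∑ i ∈ F, coef i • (a i - bfun i) := by
      rw [hdiff]
      have hs2 : (∑ i ∈ F, coef i • (a i - bfun i))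
          = ∑ i ∈ F, coef i • a i - ∑ i ∈ F, coef i • bfun i := by
        rw [← Finset.sum_sub_distrib]
        exact Finset.sum_congr rfl fun i _ => smul_sub _ _ _
      rw [hs2]
      abel
    rw [hsplit]
    have hterm : ∀ i ∈ F, ‖coef i • (a i - bfun i)‖ ≤ 2 * δ := by
      intro i hi
      refine le_trans (ContinuousLinearMap.opNorm_smul_le _ _) ?_
      have hc2 : ‖coef i‖ ≤ 2 := by
        calc ‖(mu i : ℂ) - (lam₀ i : ℂ)‖
            ≤ ‖(mu i : ℂ)‖ + ‖(lam₀ i : ℂ)‖ := norm_sub_le _ _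
          _ ≤ 2 := by
              have h1 := (mu i).2
              have h2 := (lam₀ i).2
              linarith
      have h3 := hbclose i
      have h4 : (0:ℝ) ≤ ‖a i - bfun i‖ := norm_nonneg _
      nlinarith [norm_nonneg (coef i), hδpos.le]
    calc ‖(S nu - b₀) + ∑ i ∈ F, coef i • (a i - bfun i)‖
        ≤ ‖S nu - b₀‖ + ‖∑ i ∈ F, coef i • (a i - bfun i)‖ := norm_add_le _ _
      _ ≤ ε / 2 + ∑ i ∈ F, ‖coef i • (a i - bfun i)‖ :=
          add_le_add hb₀close (norm_sum_le _ _)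
      _ ≤ ε / 2 + ∑ _i ∈ F, (2 * δ) :=
          add_le_add_right (Finset.sum_le_sum hterm) _
      _ = ε / 2 + (F.card : ℝ) * (2 * δ) := by
          rw [Finset.sum_const, nsmul_eq_mul]
      _ ≤ ε := by
          have hk : (0:ℝ) ≤ (F.card : ℝ) := Nat.cast_nonneg _
          have h40 : (4 * ((F.card : ℝ) + 1)) ≠ 0 := by positivity
          have heq : δ * (4 * ((F.card : ℝ) + 1)) = ε := by
            rw [hδdef, div_mul_cancel₀ _ h40]
          nlinarith [hδpos.le]
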